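/- The number of oscillating tableaux of length 2n and shape ∅ equals (2n−1)!! = 1·3·5⋯(2n−1), the number of complete matchings on [2n]. -/
import Mathlib


/-- An oscillating tableau of length `k` and shape `∅`: a sequence
`∅ = λ⁰, λ¹, …, λᵏ = ∅` of Young diagrams in which each `λ^{i+1}` is obtained from
`λ^i` by adding or removing exactly one square. -/
structure OscTab (k : ℕ) where
  seq : Fin (k + 1) → YoungDiagram
  first_eq : (seq 0).cells = ∅
  last_eq : (seq (Fin.last k)).cells = ∅
  step : ∀ i : Fin k,
    (seq i.castSucc ≤ seq i.succ ∧ (seq i.succ).card = (seq i.castSucc).card + 1) ∨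
    (seq i.succ ≤ seq i.castSucc ∧ (seq i.castSucc).card = (seq i.succ).card + 1)


namespace OscProof
open YoungDiagram Finset

/-- `ν` covers `μ`: obtained by adding one cell. -/
def Cov (μ ν : YoungDiagram) : Prop := μ ≤ ν ∧ ν.card = μ.card + 1

lemma cells_inj {μ ν : YoungDiagram} (h : μ.cells = ν.cells) : μ = ν := by
  cases μ; cases ν; simpa using h

lemma eq_of_le_of_card_le {μ ν : YoungDiagram} (h : μ ≤ ν) (hc : ν.card ≤ μ.card) : μ = ν :=
  cells_inj (Finset.eq_of_subset_of_card_le (YoungDiagram.cells_subset_iff.2 h) hc)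

lemma cov_insert {μ ν : YoungDiagram} (h : Cov μ ν) :
    ∃ c, c ∉ μ.cells ∧ ν.cells = insert c μ.cells := by
  obtain ⟨hle, hcard⟩ := h
  have hsub : μ.cells ⊆ ν.cells := YoungDiagram.cells_subset_iff.2 hle
  have h1 : (ν.cells \ μ.cells).card = 1 := by
    rw [Finset.card_sdiff_of_subset hsub]
    have : ν.card = ν.cells.card := rfl
    have : μ.card = μ.cells.card := rfl
    omega
  obtain ⟨c, hc⟩ := Finset.card_eq_one.1 h1
  refine ⟨c, ?_, ?_⟩
  · have : c ∈ ν.cells \ μ.cells := hc ▸ Finset.mem_singleton_self c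
    exact (Finset.mem_sdiff.1 this).2
  · have := Finset.union_sdiff_of_subset hsub
    rw [hc] at this
    rw [← this, Finset.union_comm]
    exact (Finset.insert_eq c μ.cells).symm

lemma rowLen_pos_iff {μ : YoungDiagram} {i : ℕ} : 0 < μ.rowLen i ↔ i < μ.colLen 0 := by
  rw [← YoungDiagram.mem_iff_lt_rowLen, YoungDiagram.mem_iff_lt_colLen]

/-- Rows from which a cell can be removed. -/
def remRows (μ : YoungDiagram) : Finset ℕ :=
  (Finset.range (μ.colLen 0 + 1)).filter (fun i => μ.rowLen (i + 1) < μ.rowLen i)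

lemma mem_remRows {μ : YoungDiagram} {i : ℕ} :
    i ∈ remRows μ ↔ μ.rowLen (i + 1) < μ.rowLen i := by
  simp only [remRows, Finset.mem_filter, Finset.mem_range, and_iff_right_iff_imp]
  intro h
  have h0 : 0 < μ.rowLen i := by omega
  have := rowLen_pos_iff.1 h0
  omega

/-- Rows to which a cell can be added. -/
def addRows (μ : YoungDiagram) : Finset ℕ :=
  insert 0 ((remRows μ).image (· + 1))

lemma mem_addRows {μ : YoungDiagram} {i : ℕ} :
    i ∈ addRows μ ↔ i = 0 ∨ ∃ j, i = j + 1 ∧ μ.rowLen (j + 1) < μ.rowLen j := by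
  simp only [addRows, Finset.mem_insert, Finset.mem_image, mem_remRows]
  constructor
  · rintro (h | ⟨j, hj, rfl⟩)
    · exact Or.inl h
    · exact Or.inr ⟨j, rfl, hj⟩
  · rintro (h | ⟨j, rfl, hj⟩)
    · exact Or.inl h
    · exact Or.inr ⟨j, hj, rfl⟩

lemma card_addRows (μ : YoungDiagram) : (addRows μ).card = (remRows μ).card + 1 := by
  rw [addRows, Finset.card_insert_of_notMem, Finset.card_image_of_injective _
    (fun a b h => by omega)]
  simp

end OscProof
namespace OscProof
open YoungDiagram Finset

instance : DecidableEq YoungDiagram := fun μ ν =>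
  decidable_of_iff (μ.cells = ν.cells) ⟨cells_inj, fun h => h ▸ rfl⟩

lemma mem_cells_iff_lt_rowLen {μ : YoungDiagram} {i j : ℕ} :
    (i, j) ∈ μ.cells ↔ j < μ.rowLen i := by
  rw [YoungDiagram.mem_cells]; exact YoungDiagram.mem_iff_lt_rowLen

lemma cells_lower {μ : YoungDiagram} {x y : ℕ × ℕ} (h : y ≤ x) (hx : x ∈ μ.cells) :
    y ∈ μ.cells := by
  have := μ.isLowerSet h (by simpa using hx)
  simpa using this

def addAt (μ : YoungDiagram) (i : ℕ) (h : i ∈ addRows μ) : YoungDiagram where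
  cells := insert (i, μ.rowLen i) μ.cells
  isLowerSet := by
    intro x y hyx hx
    obtain ⟨y1, y2⟩ := y
    obtain ⟨x1, x2⟩ := x
    obtain ⟨h1, h2⟩ := hyx
    simp only [Finset.coe_insert, Set.mem_insert_iff, Finset.mem_coe] at hx ⊢
    rcases hx with hx | hx
    · obtain ⟨rfl, rfl⟩ : x1 = i ∧ x2 = μ.rowLen i := by
        simpa [Prod.ext_iff] using hx
      rcases Nat.lt_or_ge y1 x1 with hlt | hge
      · rcases mem_addRows.1 h with rfl | ⟨j, rfl, hj⟩
        · omega
        · right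
          rw [mem_cells_iff_lt_rowLen]
          have : μ.rowLen j ≤ μ.rowLen y1 := μ.rowLen_anti _ _ (by omega)
          simp only at h1 h2
          omega
      · simp only at h1 h2
        have : y1 = x1 := le_antisymm h1 hge
        subst this
        rcases Nat.lt_or_ge y2 (μ.rowLen y1) with hlt | hge2
        · right; rw [mem_cells_iff_lt_rowLen]; exact hlt
        · left
          have : y2 = μ.rowLen y1 := by omega
          simp [this]
    · right
      exact cells_lower ⟨h1, h2⟩ hx

def remAt (μ : YoungDiagram) (i : ℕ) (h : i ∈ remRows μ) : YoungDiagram where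
  cells := μ.cells.erase (i, μ.rowLen i - 1)
  isLowerSet := by
    have hri : μ.rowLen (i + 1) < μ.rowLen i := mem_remRows.1 h
    intro x y hyx hx
    obtain ⟨y1, y2⟩ := y
    obtain ⟨x1, x2⟩ := x
    obtain ⟨h1, h2⟩ := hyx
    simp only at h1 h2
    simp only [Finset.coe_erase, Set.mem_diff, Finset.mem_coe, Set.mem_singleton_iff] at hx ⊢
    obtain ⟨hxμ, hxne⟩ := hx
    have hx2 : x2 < μ.rowLen x1 := mem_cells_iff_lt_rowLen.1 hxμ
    constructor
    · exact cells_lower ⟨h1, h2⟩ hxμ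
    · intro hy
      obtain ⟨hy1, hy2⟩ : y1 = i ∧ y2 = μ.rowLen i - 1 := by
        simpa [Prod.ext_iff] using hy
      subst hy1; subst hy2
      rcases Nat.eq_or_lt_of_le h1 with heq | hlt
      · apply hxne
        have hle : μ.rowLen x1 ≤ μ.rowLen y1 := μ.rowLen_anti _ _ h1
        have : x2 = μ.rowLen y1 - 1 := by omega
        simp [Prod.ext_iff, ← heq, this]
      · have : μ.rowLen x1 ≤ μ.rowLen (y1 + 1) := μ.rowLen_anti _ _ (by omega)
        omega

lemma cov_addAt (μ : YoungDiagram) (i : ℕ) (h : i ∈ addRows μ) : Cov μ (addAt μ i h) := by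
  constructor
  · rw [← YoungDiagram.cells_subset_iff]
    exact Finset.subset_insert _ _
  · show (insert (i, μ.rowLen i) μ.cells).card = _
    rw [Finset.card_insert_of_notMem]
    rw [mem_cells_iff_lt_rowLen]
    omega

lemma cov_remAt (μ : YoungDiagram) (i : ℕ) (h : i ∈ remRows μ) : Cov (remAt μ i h) μ := by
  have hri : μ.rowLen (i + 1) < μ.rowLen i := mem_remRows.1 h
  have hmem : (i, μ.rowLen i - 1) ∈ μ.cells := by
    rw [mem_cells_iff_lt_rowLen]; omega
  constructor
  · rw [← YoungDiagram.cells_subset_iff]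
    exact Finset.erase_subset _ _
  · show μ.card = (μ.cells.erase (i, μ.rowLen i - 1)).card + 1
    rw [Finset.card_erase_of_mem hmem]
    have : 0 < μ.cells.card := Finset.card_pos.2 ⟨_, hmem⟩
    show μ.cells.card = _
    omega

def up (μ : YoungDiagram) : Finset YoungDiagram :=
  (addRows μ).attach.image (fun i => addAt μ i.1 i.2)

def down (μ : YoungDiagram) : Finset YoungDiagram :=
  (remRows μ).attach.image (fun i => remAt μ i.1 i.2)

lemma mem_up {μ ν : YoungDiagram} : ν ∈ up μ ↔ Cov μ ν := by
  constructor
  · intro hν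
    simp only [up, Finset.mem_image, Finset.mem_attach, true_and] at hν
    obtain ⟨⟨i, hi⟩, rfl⟩ := hν
    exact cov_addAt μ i hi
  · intro hcov
    obtain ⟨c, hc, hcells⟩ := cov_insert hcov
    obtain ⟨i, j⟩ := c
    have hcmem : (i, j) ∈ ν.cells := by rw [hcells]; exact Finset.mem_insert_self _ _
    have hjge : μ.rowLen i ≤ j := by
      by_contra hlt
      exact hc (mem_cells_iff_lt_rowLen.2 (by omega))
    have hjle : j ≤ μ.rowLen i := by
      rcases Nat.eq_zero_or_pos j with rfl | hj
      · omega
      · have hmem : (i, j - 1) ∈ ν.cells := cells_lower ⟨le_refl i, by omega⟩ hcmem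
        have : (i, j - 1) ∈ μ.cells := by
          rw [hcells, Finset.mem_insert] at hmem
          rcases hmem with heq | h
          · exfalso; simp [Prod.ext_iff] at heq; omega
          · exact h
        rw [mem_cells_iff_lt_rowLen] at this
        omega
    have hj : j = μ.rowLen i := le_antisymm hjle hjge
    subst hj
    have hirow : i ∈ addRows μ := by
      rw [mem_addRows]
      rcases Nat.eq_zero_or_pos i with rfl | hi
      · exact Or.inl rfl
      · right
        refine ⟨i - 1, by omega, ?_⟩
        have hmem : (i - 1, μ.rowLen i) ∈ ν.cells :=
          cells_lower (x := (i, μ.rowLen i)) ⟨by omega, le_refl _⟩ hcmem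
        have hmemμ : (i - 1, μ.rowLen i) ∈ μ.cells := by
          rw [hcells, Finset.mem_insert] at hmem
          rcases hmem with heq | h
          · exfalso
            have := congrArg Prod.fst heq
            simp only at this
            omega
          · exact h
        rw [mem_cells_iff_lt_rowLen] at hmemμ
        have h1 : i - 1 + 1 = i := by omega
        rw [h1]
        omega
    simp only [up, Finset.mem_image, Finset.mem_attach, true_and]
    refine ⟨⟨i, hirow⟩, ?_⟩
    apply cells_inj
    show (insert (i, μ.rowLen i) μ.cells) = ν.cells
    rw [hcells]

lemma mem_down {μ ν : YoungDiagram} : ν ∈ down μ ↔ Cov ν μ := by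
  constructor
  · intro hν
    simp only [down, Finset.mem_image, Finset.mem_attach, true_and] at hν
    obtain ⟨⟨i, hi⟩, rfl⟩ := hν
    exact cov_remAt μ i hi
  · intro hcov
    obtain ⟨c, hc, hcells⟩ := cov_insert hcov
    obtain ⟨i, j⟩ := c
    have hcmem : (i, j) ∈ μ.cells := by rw [hcells]; exact Finset.mem_insert_self _ _
    have hνc : ν.cells = μ.cells.erase (i, j) := by
      rw [hcells, Finset.erase_insert hc]
    have hjlt : j < μ.rowLen i := mem_cells_iff_lt_rowLen.1 hcmem
    have hnext : (i, j + 1) ∉ μ.cells := by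
      intro hmem
      have hne : ((i, j + 1) : ℕ × ℕ) ≠ (i, j) := by simp
      have h2 : (i, j + 1) ∈ ν.cells := by
        rw [hνc]; exact Finset.mem_erase.2 ⟨hne, hmem⟩
      exact hc (cells_lower (x := (i, j + 1)) ⟨le_refl _, by omega⟩ h2)
    have hrow : μ.rowLen i = j + 1 := by
      rw [mem_cells_iff_lt_rowLen] at hnext
      omega
    have hbelow : (i + 1, j) ∉ μ.cells := by
      intro hmem
      have hne : ((i + 1, j) : ℕ × ℕ) ≠ (i, j) := by simp
      have h2 : (i + 1, j) ∈ ν.cells := by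
        rw [hνc]; exact Finset.mem_erase.2 ⟨hne, hmem⟩
      exact hc (cells_lower (x := (i + 1, j)) ⟨by omega, le_refl _⟩ h2)
    have hirow : i ∈ remRows μ := by
      rw [mem_remRows, hrow]
      rw [mem_cells_iff_lt_rowLen] at hbelow
      omega
    simp only [down, Finset.mem_image, Finset.mem_attach, true_and]
    refine ⟨⟨i, hirow⟩, ?_⟩
    apply cells_inj
    show μ.cells.erase (i, μ.rowLen i - 1) = ν.cells
    rw [hνc, hrow]
    norm_num

lemma card_up (μ : YoungDiagram) : (up μ).card = (addRows μ).card := by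
  rw [up, Finset.card_image_of_injOn, Finset.card_attach]
  intro ⟨a, ha⟩ _ ⟨b, hb⟩ _ hab
  dsimp only at hab
  have hmem : (a, μ.rowLen a) ∈ (addAt μ b hb).cells := by
    rw [← hab]; exact Finset.mem_insert_self _ _
  have hnot : (a, μ.rowLen a) ∉ μ.cells := by
    rw [mem_cells_iff_lt_rowLen]; omega
  rw [show (addAt μ b hb).cells = insert (b, μ.rowLen b) μ.cells from rfl,
    Finset.mem_insert] at hmem
  rcases hmem with heq | h
  · have : a = b := by simpa using congrArg Prod.fst heq
    subst this; rfl
  · exact absurd h hnot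

lemma card_down (μ : YoungDiagram) : (down μ).card = (remRows μ).card := by
  rw [down, Finset.card_image_of_injOn, Finset.card_attach]
  intro ⟨a, ha⟩ _ ⟨b, hb⟩ _ hab
  dsimp only at hab
  have hra : μ.rowLen (a + 1) < μ.rowLen a := mem_remRows.1 ha
  have hmema : (a, μ.rowLen a - 1) ∈ μ.cells := by
    rw [mem_cells_iff_lt_rowLen]; omega
  have hnot : (a, μ.rowLen a - 1) ∉ (remAt μ a ha).cells := by
    show _ ∉ μ.cells.erase _
    simp
  have hn : (a, μ.rowLen a - 1) ∉ (remAt μ b hb).cells := by rw [← hab]; exact hnot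
  rw [show (remAt μ b hb).cells = μ.cells.erase (b, μ.rowLen b - 1) from rfl,
    Finset.mem_erase] at hn
  push_neg at hn
  have heq : ((a, μ.rowLen a - 1) : ℕ × ℕ) = (b, μ.rowLen b - 1) := by
    by_contra hne
    exact (hn hne) hmema
  have : a = b := by simpa using congrArg Prod.fst heq
  subst this; rfl

lemma card_up_eq (μ : YoungDiagram) : (up μ).card = (down μ).card + 1 := by
  rw [card_up, card_down, card_addRows]

end OscProof
namespace OscProof
open YoungDiagram Finset

lemma ycard_sup_add_card_inf (μ ν : YoungDiagram) :
    (μ ⊔ ν).card + (μ ⊓ ν).card = μ.card + ν.card := by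
  show ((μ ⊔ ν).cells).card + ((μ ⊓ ν).cells).card = _
  rw [YoungDiagram.cells_sup, YoungDiagram.cells_inf]
  exact Finset.card_union_add_card_inter _ _

lemma ycard_lt_of_lt {μ ν : YoungDiagram} (h : μ < ν) : μ.card < ν.card :=
  Finset.card_lt_card (YoungDiagram.cells_ssubset_iff.2 h)

lemma key_up {t μ ν : YoungDiagram} (h1 : Cov t μ) (h2 : Cov ν μ) (hne : ν ≠ t) :
    t ⊔ ν = μ ∧ Cov (t ⊓ ν) t ∧ Cov (t ⊓ ν) ν := by
  obtain ⟨hle1, hc1⟩ := h1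
  obtain ⟨hle2, hc2⟩ := h2
  have hsub : t ⊔ ν ≤ μ := sup_le hle1 hle2
  have hsupne : t ⊔ ν ≠ t := by
    intro h
    have hνt : ν ≤ t := h ▸ le_sup_right
    exact hne (eq_of_le_of_card_le hνt (by omega))
  have hlt : t.card < (t ⊔ ν).card :=
    ycard_lt_of_lt (lt_of_le_of_ne le_sup_left (Ne.symm hsupne))
  have hsup_eq : t ⊔ ν = μ := eq_of_le_of_card_le hsub (by omega)
  have hinf := ycard_sup_add_card_inf t ν
  rw [hsup_eq] at hinf
  exact ⟨hsup_eq, ⟨inf_le_left, by omega⟩, ⟨inf_le_right, by omega⟩⟩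

lemma key_down {t μ ν : YoungDiagram} (h1 : Cov μ t) (h2 : Cov μ ν) (hne : ν ≠ t) :
    t ⊓ ν = μ ∧ Cov t (t ⊔ ν) ∧ Cov ν (t ⊔ ν) := by
  obtain ⟨hle1, hc1⟩ := h1
  obtain ⟨hle2, hc2⟩ := h2
  have hsub : μ ≤ t ⊓ ν := le_inf hle1 hle2
  have hinfne : t ⊓ ν ≠ t := by
    intro h
    have htν : t ≤ ν := h ▸ inf_le_right
    exact hne (eq_of_le_of_card_le htν (by omega)).symm
  have hlt : (t ⊓ ν).card < t.card :=
    ycard_lt_of_lt (lt_of_le_of_ne inf_le_left hinfne)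
  have hinf_eq : t ⊓ ν = μ := (eq_of_le_of_card_le hsub (by omega)).symm
  have hsup := ycard_sup_add_card_inf t ν
  rw [hinf_eq] at hsup
  exact ⟨hinf_eq, ⟨le_sup_left, by omega⟩, ⟨le_sup_right, by omega⟩⟩

lemma comm_offdiag (t : YoungDiagram) (f : YoungDiagram → ℕ) :
    ∑ p ∈ (up t).sigma (fun μ => (down μ).erase t), f p.2 =
    ∑ p ∈ (down t).sigma (fun μ => (up μ).erase t), f p.2 := by
  refine Finset.sum_bij' (fun p _ => (⟨t ⊓ p.2, p.2⟩ : Σ _ : YoungDiagram, YoungDiagram))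
    (fun p _ => (⟨t ⊔ p.2, p.2⟩ : Σ _ : YoungDiagram, YoungDiagram)) ?_ ?_ ?_ ?_ ?_
  · rintro ⟨μ, ν⟩ hp
    rw [Finset.mem_sigma] at hp ⊢
    obtain ⟨hμ, hν⟩ := hp
    rw [Finset.mem_erase] at hν
    obtain ⟨hνne, hν⟩ := hν
    obtain ⟨_, hd, hu⟩ := key_up (mem_up.1 hμ) (mem_down.1 hν) hνne
    refine ⟨mem_down.2 hd, Finset.mem_erase.2 ⟨hνne, mem_up.2 hu⟩⟩
  · rintro ⟨μ, ν⟩ hp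
    rw [Finset.mem_sigma] at hp ⊢
    obtain ⟨hμ, hν⟩ := hp
    rw [Finset.mem_erase] at hν
    obtain ⟨hνne, hν⟩ := hν
    obtain ⟨_, hd, hu⟩ := key_down (mem_down.1 hμ) (mem_up.1 hν) hνne
    refine ⟨mem_up.2 hd, Finset.mem_erase.2 ⟨hνne, mem_down.2 hu⟩⟩
  · rintro ⟨μ, ν⟩ hp
    rw [Finset.mem_sigma] at hp
    obtain ⟨hμ, hν⟩ := hp
    rw [Finset.mem_erase] at hν
    obtain ⟨hνne, hν⟩ := hν
    obtain ⟨hsup, _, _⟩ := key_up (mem_up.1 hμ) (mem_down.1 hν) hνne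
    simp only [hsup]
  · rintro ⟨μ, ν⟩ hp
    rw [Finset.mem_sigma] at hp
    obtain ⟨hμ, hν⟩ := hp
    rw [Finset.mem_erase] at hν
    obtain ⟨hνne, hν⟩ := hν
    obtain ⟨hinf, _, _⟩ := key_down (mem_down.1 hμ) (mem_up.1 hν) hνne
    simp only [hinf]
  · rintro ⟨μ, ν⟩ _
    rfl

lemma comm_sum (f : YoungDiagram → ℕ) (t : YoungDiagram) :
    ∑ μ ∈ up t, ∑ ν ∈ down μ, f ν = (∑ μ ∈ down t, ∑ ν ∈ up μ, f ν) + f t := by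
  have hup : ∀ μ ∈ up t, ∑ ν ∈ down μ, f ν = (∑ ν ∈ (down μ).erase t, f ν) + f t := by
    intro μ hμ
    have ht : t ∈ down μ := mem_down.2 (mem_up.1 hμ)
    rw [Finset.sum_erase_add _ _ ht]
  have hdown : ∀ μ ∈ down t, ∑ ν ∈ up μ, f ν = (∑ ν ∈ (up μ).erase t, f ν) + f t := by
    intro μ hμ
    have ht : t ∈ up μ := mem_up.2 (mem_down.1 hμ)
    rw [Finset.sum_erase_add _ _ ht]
  rw [Finset.sum_congr rfl hup, Finset.sum_congr rfl hdown,
    Finset.sum_add_distrib, Finset.sum_add_distrib, Finset.sum_const, Finset.sum_const,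
    Finset.sum_sigma' (up t) (fun μ => (down μ).erase t) (fun _ ν => f ν),
    Finset.sum_sigma' (down t) (fun μ => (up μ).erase t) (fun _ ν => f ν),
    comm_offdiag t f, card_up_eq]
  ring

end OscProof
namespace OscProof
open YoungDiagram Finset

def Dp (f : YoungDiagram → ℕ) : YoungDiagram → ℕ := fun t => ∑ μ ∈ up t, f μ
def Upo (f : YoungDiagram → ℕ) : YoungDiagram → ℕ := fun t => ∑ μ ∈ down t, f μ
def Ap (f : YoungDiagram → ℕ) : YoungDiagram → ℕ := fun t => Dp f t + Upo f t

lemma Dp_add (f g : YoungDiagram → ℕ) : Dp (f + g) = Dp f + Dp g := by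
  funext t; simp [Dp, Finset.sum_add_distrib]

lemma Upo_add (f g : YoungDiagram → ℕ) : Upo (f + g) = Upo f + Upo g := by
  funext t; simp [Upo, Finset.sum_add_distrib]

lemma Ap_add (f g : YoungDiagram → ℕ) : Ap (f + g) = Ap f + Ap g := by
  funext t
  have h1 := congrFun (Dp_add f g) t
  have h2 := congrFun (Upo_add f g) t
  simp only [Ap, Pi.add_apply] at *
  omega

lemma Ap_smul (c : ℕ) (f : YoungDiagram → ℕ) : Ap (c • f) = c • Ap f := by
  funext t
  simp [Ap, Dp, Upo, Finset.mul_sum, Finset.sum_add_distrib, Nat.mul_add]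

lemma Ap_iter_add (k : ℕ) (f g : YoungDiagram → ℕ) :
    Ap^[k] (f + g) = Ap^[k] f + Ap^[k] g := by
  induction k generalizing f g with
  | zero => rfl
  | succ k ih => rw [Function.iterate_succ_apply, Function.iterate_succ_apply,
      Function.iterate_succ_apply, Ap_add, ih]

lemma Ap_iter_smul (k : ℕ) (c : ℕ) (f : YoungDiagram → ℕ) :
    Ap^[k] (c • f) = c • Ap^[k] f := by
  induction k generalizing f with
  | zero => rfl
  | succ k ih => rw [Function.iterate_succ_apply, Function.iterate_succ_apply, Ap_smul, ih]

lemma Ap_zero : Ap 0 = 0 := by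
  funext t; simp [Ap, Dp, Upo]

lemma Ap_iter_zero (k : ℕ) : Ap^[k] 0 = 0 := by
  induction k with
  | zero => rfl
  | succ k ih => rw [Function.iterate_succ_apply, Ap_zero, ih]

/-- The pointwise commutator `D ∘ U = U ∘ D + 1`. -/
lemma DU_comm (f : YoungDiagram → ℕ) : Dp (Upo f) = Upo (Dp f) + f := by
  funext t
  exact comm_sum f t

lemma DA_comm (f : YoungDiagram → ℕ) : Dp (Ap f) = Ap (Dp f) + f := by
  funext t
  have h := congrFun (DU_comm f) t
  simp only [Ap, Dp, Upo, Pi.add_apply, Finset.sum_add_distrib] at *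
  omega

lemma DA_iter_comm (k : ℕ) (f : YoungDiagram → ℕ) :
    Dp (Ap^[k + 1] f) = Ap^[k + 1] (Dp f) + (k + 1) • Ap^[k] f := by
  induction k generalizing f with
  | zero => simpa using DA_comm f
  | succ k ih =>
    have e1 : Ap^[k + 1 + 1] f = Ap^[k + 1] (Ap f) := Function.iterate_succ_apply Ap (k + 1) f
    have e2 : Ap^[k] (Ap f) = Ap^[k + 1] f := (Function.iterate_succ_apply Ap k f).symm
    have e3 : Ap^[k + 1] (Ap (Dp f)) = Ap^[k + 1 + 1] (Dp f) :=
      (Function.iterate_succ_apply Ap (k + 1) (Dp f)).symm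
    rw [e1, ih (Ap f), DA_comm f, Ap_iter_add, e2, e3]
    funext t
    simp only [Pi.add_apply, Pi.smul_apply, smul_eq_mul]
    ring

/-- Indicator of the empty diagram. -/
def dlt : YoungDiagram → ℕ := fun t => if t = ⊥ then 1 else 0

lemma Dp_dlt : Dp dlt = 0 := by
  funext t
  apply Finset.sum_eq_zero
  intro μ hμ
  have hc := (mem_up.1 hμ).2
  have : μ ≠ ⊥ := by
    intro h
    rw [h] at hc
    have : (⊥ : YoungDiagram).card = 0 := by simp [YoungDiagram.card, YoungDiagram.cells_bot]
    omega
  simp [dlt, this]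

lemma down_bot : down (⊥ : YoungDiagram) = ∅ := by
  apply Finset.eq_empty_of_forall_notMem
  intro μ hμ
  have hc := (mem_down.1 hμ).2
  have : (⊥ : YoungDiagram).card = 0 := by simp [YoungDiagram.card, YoungDiagram.cells_bot]
  omega

/-- The walk-counting recursion at the empty shape. -/
lemma w_rec (k : ℕ) : Ap^[k + 2] dlt ⊥ = (k + 1) * Ap^[k] dlt ⊥ := by
  have h1 : Ap^[k + 2] dlt = Ap (Ap^[k + 1] dlt) := Function.iterate_succ_apply' Ap (k + 1) dlt
  rw [h1]
  show Dp (Ap^[k + 1] dlt) ⊥ + Upo (Ap^[k + 1] dlt) ⊥ = _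
  have h2 : Upo (Ap^[k + 1] dlt) ⊥ = 0 := by simp [Upo, down_bot]
  rw [h2, congrFun (DA_iter_comm k dlt) ⊥, Dp_dlt, Ap_iter_zero]
  simp [Nat.add_mul, Nat.mul_comm]

lemma w_empty (n : ℕ) : Ap^[2 * n] dlt ⊥ = Nat.doubleFactorial (2 * n - 1) := by
  induction n with
  | zero => simp [dlt, Nat.doubleFactorial]
  | succ n ih =>
    have h2 : 2 * (n + 1) = 2 * n + 2 := by ring
    rw [h2, w_rec (2 * n), ih]
    rcases Nat.eq_zero_or_pos n with rfl | hn
    · simp [Nat.doubleFactorial]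
    · have h3 : 2 * n + 2 - 1 = (2 * n - 1) + 2 := by omega
      have h4 : 2 * n + 1 = (2 * n - 1) + 2 := by omega
      rw [h3, h4, Nat.doubleFactorial]

end OscProof
namespace OscProof
open YoungDiagram Finset

def adj (a b : YoungDiagram) : Prop := Cov a b ∨ Cov b a

def nbr (t : YoungDiagram) : Finset YoungDiagram := up t ∪ down t

lemma mem_nbr {t μ : YoungDiagram} : μ ∈ nbr t ↔ adj μ t := by
  simp only [nbr, Finset.mem_union, mem_up, mem_down, adj]
  exact or_comm

lemma up_disj_down (t : YoungDiagram) : Disjoint (up t) (down t) := by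
  rw [Finset.disjoint_left]
  intro μ h1 h2
  have hc1 := (mem_up.1 h1).2
  have hc2 := (mem_down.1 h2).2
  omega

lemma Ap_eq_nbr (f : YoungDiagram → ℕ) (t : YoungDiagram) :
    Ap f t = ∑ μ ∈ nbr t, f μ := by
  rw [nbr, Finset.sum_union (up_disj_down t)]
  rfl

def Walk (k : ℕ) (t : YoungDiagram) :=
  { f : Fin (k + 1) → YoungDiagram //
      f 0 = ⊥ ∧ f (Fin.last k) = t ∧ ∀ i : Fin k, adj (f i.castSucc) (f i.succ) }

lemma sigma_walk_ext {k : ℕ} {t : YoungDiagram}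
    {a b : Σ μ : {μ // μ ∈ nbr t}, Walk k μ.1}
    (h1 : a.1.1 = b.1.1) (h2 : a.2.1 = b.2.1) : a = b := by
  obtain ⟨⟨μa, hμa⟩, fa, hfa⟩ := a
  obtain ⟨⟨μb, hμb⟩, fb, hfb⟩ := b
  dsimp only at h1 h2
  subst h1
  have h3 : (⟨fa, hfa⟩ : Walk k μa) = ⟨fb, hfb⟩ := Subtype.ext h2
  rw [h3]

def walkSucc (k : ℕ) (t : YoungDiagram) :
    Walk (k + 1) t ≃ Σ μ : {μ // μ ∈ nbr t}, Walk k μ.1 where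
  toFun w := ⟨⟨w.1 (Fin.last k).castSucc, by
      rw [mem_nbr]
      have h := w.2.2.2 (Fin.last k)
      rwa [Fin.succ_last, w.2.2.1] at h⟩,
    ⟨fun i => w.1 i.castSucc, by
      refine ⟨?_, rfl, ?_⟩
      · show w.1 (Fin.castSucc 0) = ⊥
        have h0 : (Fin.castSucc (0 : Fin (k + 1))) = 0 := rfl
        rw [h0]; exact w.2.1
      · intro i
        have h := w.2.2.2 i.castSucc
        rwa [Fin.succ_castSucc] at h⟩⟩
  invFun p := ⟨Fin.snoc p.2.1 t, by
      refine ⟨?_, Fin.snoc_last _ _, ?_⟩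
      · have h0 : ((0 : Fin (k + 2))) = Fin.castSucc 0 := rfl
        rw [h0, Fin.snoc_castSucc]; exact p.2.2.1
      · intro i
        induction i using Fin.lastCases with
        | last =>
          rw [Fin.snoc_castSucc, Fin.succ_last, Fin.snoc_last, p.2.2.2.1]
          exact mem_nbr.1 p.1.2
        | cast j =>
          rw [Fin.succ_castSucc, Fin.snoc_castSucc, Fin.snoc_castSucc]
          exact p.2.2.2.2 j⟩
  left_inv w := by
    apply Subtype.ext
    funext i
    dsimp only
    induction i using Fin.lastCases with
    | last => rw [Fin.snoc_last]; exact w.2.2.1.symm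
    | cast j => rw [Fin.snoc_castSucc]
  right_inv p := sigma_walk_ext
    (by
      dsimp only
      rw [Fin.snoc_castSucc]; exact p.2.2.2.1)
    (by
      funext i
      dsimp only
      exact Fin.snoc_castSucc _ _ _)

instance walk_finite (k : ℕ) (t : YoungDiagram) : Finite (Walk k t) := by
  induction k generalizing t with
  | zero =>
    have : Subsingleton (Walk 0 t) := by
      constructor
      intro a b
      apply Subtype.ext
      funext i
      have hi : i = 0 := Fin.ext (by omega)
      rw [hi, a.2.1, b.2.1]
    exact Finite.of_subsingleton
  | succ k ih =>
    exact Finite.of_equiv _ (walkSucc k t).symm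

lemma nat_card_sigma {ι : Type*} [Fintype ι] (f : ι → Type*) [∀ i, Finite (f i)] :
    Nat.card (Σ i, f i) = ∑ i, Nat.card (f i) := by
  letI : ∀ i, Fintype (f i) := fun i => Fintype.ofFinite _
  simp [Nat.card_eq_fintype_card, Fintype.card_sigma]

lemma card_walk (k : ℕ) (t : YoungDiagram) : Nat.card (Walk k t) = Ap^[k] dlt t := by
  induction k generalizing t with
  | zero =>
    show Nat.card (Walk 0 t) = dlt t
    by_cases h : t = ⊥
    · subst h
      have hne : Nonempty (Walk 0 ⊥) := ⟨⟨fun _ => ⊥, rfl, rfl, fun i => i.elim0⟩⟩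
      have : Subsingleton (Walk 0 (⊥ : YoungDiagram)) := by
        constructor
        intro a b
        apply Subtype.ext
        funext i
        have hi : i = 0 := Fin.ext (by omega)
        rw [hi, a.2.1, b.2.1]
      rw [Nat.card_unique]
      simp [dlt]
    · have : IsEmpty (Walk 0 t) := by
        constructor
        intro w
        exact h (w.2.2.1.symm.trans w.2.1)
      rw [Nat.card_of_isEmpty]
      simp [dlt, h]
  | succ k ih =>
    rw [Nat.card_congr (walkSucc k t), nat_card_sigma]
    have h1 : ∀ μ : {μ // μ ∈ nbr t}, Nat.card (Walk k μ.1) = Ap^[k] dlt μ.1 :=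
      fun μ => ih μ.1
    rw [Finset.sum_congr rfl (fun μ _ => h1 μ)]
    rw [Finset.sum_coe_sort (nbr t) (fun μ => Ap^[k] dlt μ)]
    rw [Function.iterate_succ_apply' Ap k dlt, Ap_eq_nbr]

end OscProof
namespace OscProof

def oscEquiv (k : ℕ) : OscTab k ≃ Walk k ⊥ where
  toFun o := ⟨o.seq, by
      refine ⟨?_, ?_, ?_⟩
      · exact cells_inj (by rw [o.first_eq, YoungDiagram.cells_bot])
      · exact cells_inj (by rw [o.last_eq, YoungDiagram.cells_bot])
      · intro i
        exact o.step i⟩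
  invFun w := ⟨w.1,
    by rw [w.2.1]; exact YoungDiagram.cells_bot,
    by rw [w.2.2.1]; exact YoungDiagram.cells_bot,
    w.2.2.2⟩
  left_inv o := rfl
  right_inv w := rfl

end OscProof

/-- The number of oscillating tableaux of length `2n` and shape `∅` equals
`(2n−1)!! = 1·3·5⋯(2n−1)`, the number of complete matchings on `[2n]`. -/
theorem card_oscTab (n : ℕ) :
    Nat.card (OscTab (2 * n)) = Nat.doubleFactorial (2 * n - 1) := by
  rw [Nat.card_congr (OscProof.oscEquiv (2 * n)), OscProof.card_walk, OscProof.w_empty]
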